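/- (Regret bound for SM3-II.) Assume the loss functions ℓ_1,…,ℓ_T are convex and let w_1,…,w_T be the iterates generated by SM3-II with learning rate η > 0. Then for any w* ∈ ℝ^d with ‖w_t − w*‖_∞ ≤ D for all t, the regret satisfies ∑_{t=1}^T (ℓ_t(w_t) − ℓ_t(w*)) ≤ (D²/(2η) + η) · ∑_{i=1}^d √(ν'_T(i)). -/

import Mathlib

open Finset


/-- Telescoping sum over `Icc 1 T`. -/
lemma telescope_Icc (f : ℕ → ℝ) (T : ℕ) :
    ∑ t ∈ Finset.Icc 1 T, (f t - f (t - 1)) = f T - f 0 := by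
  induction T with
  | zero => simp
  | succ n ih =>
      rw [Finset.sum_Icc_succ_top (by omega : 1 ≤ n + 1), ih]
      simp

/-- Abel-type summation bound. -/
lemma abel_bound (s b : ℕ → ℝ) (D2 : ℝ) (T : ℕ) (hT : 1 ≤ T)
    (hsnn : ∀ t, 0 ≤ s t) (hsm : ∀ t, s t ≤ s (t + 1))
    (hbnn : ∀ t, 0 ≤ b t) (hbD : ∀ t, 1 ≤ t → t ≤ T → b t ≤ D2) :
    ∑ t ∈ Finset.Icc 1 T, s t * (b t - b (t + 1)) ≤ D2 * s T - s T * b (T + 1) := by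
  induction T, hT using Nat.le_induction with
  | base =>
      simp only [Finset.Icc_self, Finset.sum_singleton]
      nlinarith [hbD 1 le_rfl le_rfl, hsnn 1, hbnn 2]
  | succ n hn ih =>
      rw [Finset.sum_Icc_succ_top (by omega : 1 ≤ n + 1)]
      have ih' := ih (fun t h1 h2 => hbD t h1 (by omega))
      nlinarith [hsm n, hbD (n + 1) (by omega) le_rfl, hbnn (n + 1), hbnn (n + 2), hsnn n, hsnn (n+1)]

/-- Key per-coordinate AdaGrad-style regret lemma. -/
lemma sm3_key (T : ℕ) (hT : 1 ≤ T) (a g x : ℕ → ℝ) (y D η : ℝ)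
    (hη : 0 < η) (hD : 0 ≤ D) (ha0 : a 0 = 0)
    (hmono : ∀ t, 1 ≤ t → a (t - 1) + g t ^ 2 ≤ a t)
    (hx : ∀ t, 1 ≤ t → t ≤ T →
      x (t + 1) = if 0 < a t then x t - η * g t / Real.sqrt (a t) else x t)
    (hb : ∀ t, 1 ≤ t → t ≤ T → |x t - y| ≤ D) :
    ∑ t ∈ Finset.Icc 1 T, g t * (x t - y) ≤ (D ^ 2 / (2 * η) + η) * Real.sqrt (a T) := by
  -- nonnegativity of a
  have hann : ∀ t, 0 ≤ a t := by
    intro t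
    induction t with
    | zero => simp [ha0]
    | succ n ih =>
        have h := hmono (n + 1) (by omega)
        simp only [Nat.add_sub_cancel] at h
        nlinarith [sq_nonneg (g (n + 1))]
  have ham : ∀ t, a t ≤ a (t + 1) := by
    intro t
    have h := hmono (t + 1) (by omega)
    simp only [Nat.add_sub_cancel] at h
    nlinarith [sq_nonneg (g (t + 1))]
  set s : ℕ → ℝ := fun t => Real.sqrt (a t) with hs
  have hsnn : ∀ t, 0 ≤ s t := fun t => Real.sqrt_nonneg _
  have hsm : ∀ t, s t ≤ s (t + 1) := fun t => Real.sqrt_le_sqrt (ham t)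
  have hs0 : s 0 = 0 := by simp [hs, ha0]
  have hssq : ∀ t, s t ^ 2 = a t := fun t => Real.sq_sqrt (hann t)
  set b : ℕ → ℝ := fun t => (x t - y) ^ 2 with hbdef
  -- g vanishes when a_t = 0
  have hg0 : ∀ t, 1 ≤ t → a t = 0 → g t = 0 := by
    intro t ht h0
    have h := hmono t ht
    have := hann (t - 1)
    nlinarith [sq_nonneg (g t)]
  -- per-step bound
  have hstep : ∀ t, 1 ≤ t → t ≤ T →
      g t * (x t - y) ≤ s t * (b t - b (t + 1)) / (2 * η) + η / 2 * (g t ^ 2 / s t) := by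
    intro t h1 h2
    by_cases hpos : 0 < a t
    · have hstpos : 0 < s t := Real.sqrt_pos.mpr hpos
      have hxs := hx t h1 h2
      rw [if_pos hpos] at hxs
      have hb1 : b (t + 1) = (x t - η * g t / s t - y) ^ 2 := by
        simp only [hbdef, hxs]
        rfl
      have hne : s t ≠ 0 := ne_of_gt hstpos
      have hηne : η ≠ 0 := ne_of_gt hη
      have hbt : b t = (x t - y) ^ 2 := rfl
      have key : s t * (b t - b (t + 1)) / (2 * η) + η / 2 * (g t ^ 2 / s t)
          = g t * (x t - y) := by
        rw [hb1, hbt]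
        have h2 : s t ^ 2 = a t := hssq t
        field_simp
        ring
      rw [key]
    · have ha0' : a t = 0 := le_antisymm (not_lt.mp hpos) (hann t)
      have hg : g t = 0 := hg0 t h1 ha0'
      have hxs := hx t h1 h2
      rw [if_neg hpos] at hxs
      simp [hg, hbdef, hxs]
  -- second per-step bound
  have hstep2 : ∀ t, 1 ≤ t → g t ^ 2 / s t ≤ 2 * (s t - s (t - 1)) := by
    intro t h1
    by_cases hpos : 0 < a t
    · have hstpos : 0 < s t := Real.sqrt_pos.mpr hpos
      have hgle : g t ^ 2 ≤ a t - a (t - 1) := by linarith [hmono t h1]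
      have hsle : s (t - 1) ≤ s t := Real.sqrt_le_sqrt (by linarith [sq_nonneg (g t), hmono t h1])
      rw [div_le_iff₀ hstpos]
      nlinarith [hssq t, hssq (t - 1), hsnn (t - 1)]
    · have ha0' : a t = 0 := le_antisymm (not_lt.mp hpos) (hann t)
      have hg : g t = 0 := hg0 t h1 ha0'
      have hat1 : a (t - 1) = 0 := by
        have h := hmono t h1
        have := hann (t - 1)
        nlinarith [sq_nonneg (g t)]
      simp [hg, hs, ha0', hat1]
  calc ∑ t ∈ Finset.Icc 1 T, g t * (x t - y)
      ≤ ∑ t ∈ Finset.Icc 1 T, (s t * (b t - b (t + 1)) / (2 * η) + η / 2 * (g t ^ 2 / s t)) := by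
        apply Finset.sum_le_sum
        intro t ht
        rw [Finset.mem_Icc] at ht
        exact hstep t ht.1 ht.2
    _ = (∑ t ∈ Finset.Icc 1 T, s t * (b t - b (t + 1))) / (2 * η)
        + η / 2 * ∑ t ∈ Finset.Icc 1 T, (g t ^ 2 / s t) := by
        rw [Finset.sum_add_distrib, Finset.sum_div, Finset.mul_sum]
    _ ≤ (D ^ 2 * s T) / (2 * η) + η / 2 * (2 * s T) := by
        have h1 : ∑ t ∈ Finset.Icc 1 T, s t * (b t - b (t + 1)) ≤ D ^ 2 * s T := by
          have := abel_bound s b (D ^ 2) T hT hsnn hsm (fun t => sq_nonneg _)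
            (fun t ht1 ht2 => by
              show (x t - y) ^ 2 ≤ D ^ 2
              have h := hb t ht1 ht2
              nlinarith [abs_nonneg (x t - y), sq_abs (x t - y)])
          have hb2 : (0:ℝ) ≤ b (T + 1) := sq_nonneg (x (T + 1) - y)
          nlinarith [hsnn T, mul_nonneg (hsnn T) hb2]
        have h2 : ∑ t ∈ Finset.Icc 1 T, (g t ^ 2 / s t) ≤ 2 * s T := by
          calc ∑ t ∈ Finset.Icc 1 T, (g t ^ 2 / s t)
              ≤ ∑ t ∈ Finset.Icc 1 T, 2 * (s t - s (t - 1)) := by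
                apply Finset.sum_le_sum
                intro t ht
                rw [Finset.mem_Icc] at ht
                exact hstep2 t ht.1
            _ = 2 * (s T - s 0) := by
                rw [← Finset.mul_sum, telescope_Icc s T]
            _ = 2 * s T := by rw [hs0]; ring
        have h2η : 0 < 2 * η := by linarith
        gcongr
    _ = (D ^ 2 / (2 * η) + η) * s T := by field_simp

/-- Regret bound for SM3-II: for convex losses, the iterates of SM3-II
with learning rate `η > 0` satisfy, for any `w*` with `‖w t − w*‖_∞ ≤ D` for all `t`,
`∑_{t=1}^T (ℓ t (w t) − ℓ t w*) ≤ (D²/(2η) + η) ∑ i √(ν' T i)`. -/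
theorem sm3_II_regret_bound
    (d k T : ℕ) (hd : 0 < d) (hk : 0 < k) (hT : 0 < T)
    (S : Fin k → Finset (Fin d))
    (hS : ∀ r, (S r).Nonempty)
    (hcover : ∀ i : Fin d, ∃ r, i ∈ S r)
    (g : ℕ → Fin d → ℝ)
    (μ' : ℕ → Fin k → ℝ) (ν' : ℕ → Fin d → ℝ)
    (hμ'0 : ∀ r, μ' 0 r = 0)
    (hν' : ∀ t, 1 ≤ t → ∀ i : Fin d, ν' t i =
      (Finset.univ.filter (fun r => i ∈ S r)).inf'
        (by obtain ⟨r, hr⟩ := hcover i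
            exact ⟨r, Finset.mem_filter.mpr ⟨Finset.mem_univ r, hr⟩⟩)
        (fun r => μ' (t - 1) r) + g t i ^ 2)
    (hμ' : ∀ t, 1 ≤ t → ∀ r, μ' t r = (S r).sup' (hS r) (fun j => ν' t j))
    (w : ℕ → (Fin d → ℝ))
    (ℓ : ℕ → (Fin d → ℝ) → ℝ)
    (hconv : ∀ t ∈ Finset.Icc 1 T, ConvexOn ℝ Set.univ (ℓ t))
    (hsubgrad : ∀ t ∈ Finset.Icc 1 T, ∀ v : Fin d → ℝ,
      ℓ t (w t) + ∑ i : Fin d, g t i * (v i - w t i) ≤ ℓ t v)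
    (η : ℝ) (hη : 0 < η)
    (hw1 : w 1 = 0)
    (hiter : ∀ t ∈ Finset.Icc 1 T, ∀ i : Fin d,
      w (t + 1) i = if 0 < ν' t i then w t i - η * g t i / Real.sqrt (ν' t i) else w t i)
    (wstar : Fin d → ℝ) (D : ℝ) (hD : 0 ≤ D)
    (hbound : ∀ t ∈ Finset.Icc 1 T, ‖w t - wstar‖ ≤ D) :
    ∑ t ∈ Finset.Icc 1 T, (ℓ t (w t) - ℓ t wstar)
      ≤ (D ^ 2 / (2 * η) + η) * ∑ i : Fin d, Real.sqrt (ν' T i) := by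
  -- extended accumulator with value 0 at t = 0
  set N : Fin d → ℕ → ℝ := fun i t => if t = 0 then 0 else ν' t i with hN
  -- the inf over covering sets of μ'
  have hmonoN : ∀ i : Fin d, ∀ t, 1 ≤ t → N i (t - 1) + g t i ^ 2 ≤ N i t := by
    intro i t ht
    obtain ⟨r0, hr0⟩ := hcover i
    have hne : ((Finset.univ.filter (fun r => i ∈ S r))).Nonempty :=
      ⟨r0, Finset.mem_filter.mpr ⟨Finset.mem_univ r0, hr0⟩⟩
    have hNt : N i t = ν' t i := by simp [hN, Nat.one_le_iff_ne_zero.mp ht]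
    rw [hNt, hν' t ht i]
    rcases Nat.eq_or_lt_of_le ht with h1 | h2
    · -- t = 1
      have ht1 : t = 1 := h1.symm
      subst ht1
      have : N i 0 = 0 := by simp [hN]
      rw [this]
      have hinf : 0 ≤ (Finset.univ.filter (fun r => i ∈ S r)).inf' hne
          (fun r => μ' 0 r) := by
        apply Finset.le_inf'
        intro r hr
        simp [hμ'0 r]
      linarith
    · -- t ≥ 2
      have ht2 : 2 ≤ t := h2
      have hNt1 : N i (t - 1) = ν' (t - 1) i := by
        simp [hN, show t - 1 ≠ 0 by omega]
      rw [hNt1]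
      have hinf : ν' (t - 1) i ≤ (Finset.univ.filter (fun r => i ∈ S r)).inf' hne
          (fun r => μ' (t - 1) r) := by
        apply Finset.le_inf'
        intro r hr
        rw [Finset.mem_filter] at hr
        rw [hμ' (t - 1) (by omega) r]
        exact Finset.le_sup' (fun j => ν' (t - 1) j) hr.2
      linarith
  -- regret reduced to linearized regret
  have h1 : ∀ t ∈ Finset.Icc 1 T, ℓ t (w t) - ℓ t wstar
      ≤ ∑ i : Fin d, g t i * (w t i - wstar i) := by
    intro t ht
    have hs := hsubgrad t ht wstar
    have hsum : ∑ i : Fin d, g t i * (w t i - wstar i)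
        = -∑ i : Fin d, g t i * (wstar i - w t i) := by
      rw [← Finset.sum_neg_distrib]
      apply Finset.sum_congr rfl
      intro i _
      ring
    rw [hsum]
    linarith
  calc ∑ t ∈ Finset.Icc 1 T, (ℓ t (w t) - ℓ t wstar)
      ≤ ∑ t ∈ Finset.Icc 1 T, ∑ i : Fin d, g t i * (w t i - wstar i) :=
        Finset.sum_le_sum h1
    _ = ∑ i : Fin d, ∑ t ∈ Finset.Icc 1 T, g t i * (w t i - wstar i) :=
        Finset.sum_comm
    _ ≤ ∑ i : Fin d, (D ^ 2 / (2 * η) + η) * Real.sqrt (ν' T i) := by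
        apply Finset.sum_le_sum
        intro i _
        have key := sm3_key T hT (N i) (fun t => g t i) (fun t => w t i)
          (wstar i) D η hη hD (by simp [hN])
          (hmonoN i)
          (fun t ht1 ht2 => by
            have hNt : N i t = ν' t i := by simp [hN, Nat.one_le_iff_ne_zero.mp ht1]
            rw [hNt]
            exact hiter t (Finset.mem_Icc.mpr ⟨ht1, ht2⟩) i)
          (fun t ht1 ht2 => by
            have hb := hbound t (Finset.mem_Icc.mpr ⟨ht1, ht2⟩)
            have := norm_le_pi_norm (w t - wstar) i
            simp only [Pi.sub_apply, Real.norm_eq_abs] at this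
            linarith)
        have hNT : N i T = ν' T i := by simp [hN, Nat.one_le_iff_ne_zero.mp hT]
        rw [← hNT]
        exact key
    _ = (D ^ 2 / (2 * η) + η) * ∑ i : Fin d, Real.sqrt (ν' T i) := by
        rw [Finset.mul_sum]
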